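/- Let t be a positive integer and I, I' ⊆ [1,n] be intervals with |I| ≥ 25t and |I △ I'| ≥ t (symmetric difference of the index sets). Then for a uniformly random x ∈ {0,1}^n, the probability that the edit distance between the subwords x_I and x_{I'} is less than t is at most 2^{-5t}. -/

import Mathlib

open Classical

/-- Subword of `x : Fin n → Bool` starting at `a` of length `len`. -/
def subwordF {n : ℕ} (x : Fin n → Bool) (a len : ℕ) : List Bool :=
  (List.range len).map fun k => if h : a + k < n then x ⟨a + k, h⟩ else false

/-- Length of a longest common subsequence of two boolean strings. -/
noncomputable def lcsLen (u v : List Bool) : ℕ :=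
  Nat.findGreatest
    (fun k => ∃ w : List Bool, w.length = k ∧ w.Sublist u ∧ w.Sublist v)
    (min u.length v.length)

/-- Edit distance (insertions/deletions): |u| + |v| - 2·|LCS(u,v)|. -/
noncomputable def editDist (u v : List Bool) : ℕ :=
  u.length + v.length - 2 * lcsLen u v

section StmtHelpers
open Classical Finset
open Classical Finset

/-- value of x at natural index m (false out of range). -/
def bitAt {n : ℕ} (x : Fin n → Bool) (m : ℕ) : Bool :=
  if h : m < n then x ⟨m, h⟩ else false

/-- k-th smallest element of a finset of naturals. -/
noncomputable def enumS (S : Finset ℕ) (k : ℕ) : ℕ :=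
  if hk : k < S.card then S.orderEmbOfFin rfl ⟨k, hk⟩ else 0

lemma enumS_mem {S : Finset ℕ} {k : ℕ} (hk : k < S.card) : enumS S k ∈ S := by
  rw [enumS, dif_pos hk]; exact Finset.orderEmbOfFin_mem _ _ _

lemma enumS_lt {S : Finset ℕ} {k k' : ℕ} (h : k < k') (hk' : k' < S.card) :
    enumS S k < enumS S k' := by
  rw [enumS, enumS, dif_pos hk', dif_pos (h.trans hk')]
  exact (S.orderEmbOfFin rfl).strictMono (by exact h)

lemma enumS_gap {S : Finset ℕ} : ∀ j, j < S.card → ∀ i, i ≤ j →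
    enumS S i + (j - i) ≤ enumS S j := by
  intro j
  induction j with
  | zero =>
    intro _ i hi
    have : i = 0 := by omega
    subst this; simp
  | succ j ih =>
    intro hj i hi
    rcases Nat.eq_or_lt_of_le hi with rfl | hlt
    · omega
    · have h1 := ih (by omega) i (by omega)
      have h2 : enumS S j < enumS S (j+1) := enumS_lt (by omega) hj
      omega

lemma enumS_image {L : ℕ} (f : Fin L → ℕ) (hf : StrictMono f) (k : ℕ) (hk : k < L) :
    enumS (Finset.image f Finset.univ) k = f ⟨k, hk⟩ := by
  have hcard : (Finset.image f Finset.univ).card = L := by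
    rw [Finset.card_image_of_injective _ hf.injective, Finset.card_univ, Fintype.card_fin]
  have hk' : k < (Finset.image f Finset.univ).card := by omega
  have huniq : f = (Finset.image f Finset.univ).orderEmbOfFin hcard :=
    Finset.orderEmbOfFin_unique hcard (fun x => Finset.mem_image_of_mem f (Finset.mem_univ x)) hf
  rw [enumS, dif_pos hk']
  conv_rhs => rw [huniq]
  exact Finset.orderEmbOfFin_eq_orderEmbOfFin_iff.mpr rfl

/-- symm diff of two Ico's is at most |left shift| + |right shift| (truncated subs). -/
lemma symmDiff_Ico_le (a s a' s' : ℕ) :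
    (symmDiff (Finset.Ico a (a + s)) (Finset.Ico a' (a' + s'))).card ≤
      ((a - a') + (a' - a)) + (((a + s) - (a' + s')) + ((a' + s') - (a + s))) := by
  have hsub : symmDiff (Finset.Ico a (a + s)) (Finset.Ico a' (a' + s')) ⊆
      (Finset.Ico (min a a') (max a a')) ∪
        (Finset.Ico (min (a + s) (a' + s')) (max (a + s) (a' + s'))) := by
    intro x hx
    simp only [Finset.mem_symmDiff, Finset.mem_Ico, Finset.mem_union,
      Finset.mem_sdiff, lt_min_iff, le_max_iff, min_le_iff, max_lt_iff, le_min_iff] at hx ⊢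
    omega
  calc (symmDiff (Finset.Ico a (a + s)) (Finset.Ico a' (a' + s'))).card
      ≤ _ := Finset.card_le_card hsub
    _ ≤ (Finset.Ico (min a a') (max a a')).card +
        (Finset.Ico (min (a + s) (a' + s')) (max (a + s) (a' + s'))).card :=
        Finset.card_union_le _ _
    _ ≤ _ := by
        rw [Nat.card_Ico, Nat.card_Ico]
        rcases le_total a a' with h | h <;> rcases le_total (a + s) (a' + s') with h2 | h2 <;>
          simp [min_eq_left, min_eq_right, max_eq_left, max_eq_right, h, h2]

/-- If an increasing matching between [a,a+s) and [a',a'+s') given by selected index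
sets S, T has a fixed point, then the symmetric difference is at most the number of
unselected indices. -/
lemma fixedPoint_symmDiff_le {a s a' s' : ℕ} {S T : Finset ℕ} {L k : ℕ}
    (hS : S ⊆ Finset.range s) (hT : T ⊆ Finset.range s')
    (hcS : S.card = L) (hcT : T.card = L) (hk : k < L)
    (hfix : a + enumS S k = a' + enumS T k) :
    (symmDiff (Finset.Ico a (a + s)) (Finset.Ico a' (a' + s'))).card ≤
      (s - L) + (s' - L) := by
  set P := enumS S k with hP
  set Q := enumS T k with hQ
  -- basic bounds
  have hkP : k ≤ P := by
    have := enumS_gap (S := S) k (by omega) 0 (by omega)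
    omega
  have hkQ : k ≤ Q := by
    have := enumS_gap (S := T) k (by omega) 0 (by omega)
    omega
  have hPs : P + (L - 1 - k) < s := by
    have h1 := enumS_gap (S := S) (L - 1) (by omega) k (by omega)
    have h2 : enumS S (L - 1) ∈ Finset.range s := hS (enumS_mem (by omega))
    rw [Finset.mem_range] at h2
    omega
  have hQs : Q + (L - 1 - k) < s' := by
    have h1 := enumS_gap (S := T) (L - 1) (by omega) k (by omega)
    have h2 : enumS T (L - 1) ∈ Finset.range s' := hT (enumS_mem (by omega))
    rw [Finset.mem_range] at h2
    omega
  have hD := symmDiff_Ico_le a s a' s'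
  omega

set_option maxHeartbeats 1000000 in
/-- Counting strings satisfying matching constraints with no fixed points. -/
lemma countA (n : ℕ) : ∀ (L : ℕ) (p q : Fin L → Fin n), StrictMono p → StrictMono q →
    (∀ i, p i ≠ q i) →
    (Finset.univ.filter fun x : Fin n → Bool => ∀ i, x (p i) = x (q i)).card * 2 ^ L ≤ 2 ^ n := by
  intro L
  induction L with
  | zero =>
    intro p q _ _ _
    simp only [IsEmpty.forall_iff, Finset.filter_true_of_mem, Finset.mem_univ, forall_const,
      pow_zero, mul_one]
    have : (Finset.univ : Finset (Fin n → Bool)).card = 2 ^ n := by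
      simp [Finset.card_univ]
    omega
  | succ L ih =>
    intro p q hp hq hpq
    set i₀ : Fin (L + 1) := Fin.last L with hi₀
    set v : Fin n := max (p i₀) (q i₀) with hv
    set w : Fin n := min (p i₀) (q i₀) with hw
    have hvw : w < v := by
      rcases (hpq i₀).lt_or_gt with h | h
      · rw [hv, hw, max_eq_right h.le, min_eq_left h.le]; exact h
      · rw [hv, hw, max_eq_left h.le, min_eq_right h.le]; exact h
    have hpv : ∀ i : Fin L, p i.castSucc < v := fun i =>
      lt_of_lt_of_le (hp (Fin.castSucc_lt_last i)) (le_max_left _ _)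
    have hqv : ∀ i : Fin L, q i.castSucc < v := fun i =>
      lt_of_lt_of_le (hq (Fin.castSucc_lt_last i)) (le_max_right _ _)
    set A1 : Finset (Fin n → Bool) :=
      Finset.univ.filter fun x => ∀ i, x (p i) = x (q i) with hA1
    set A0 : Finset (Fin n → Bool) :=
      Finset.univ.filter fun x => ∀ i : Fin L, x (p i.castSucc) = x (q i.castSucc) with hA0
    -- key: 2 * A1.card ≤ A0.card
    have hkey : A1.card * 2 ≤ A0.card := by
      have hinj : ∀ z ∈ A1 ×ˢ (Finset.univ : Finset Bool),
          Function.update z.1 v (xor z.2 (z.1 v)) ∈ A0 := by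
        rintro ⟨x, b⟩ hz
        simp only [Finset.mem_product, hA1, Finset.mem_filter, Finset.mem_univ, true_and] at hz
        simp only [hA0, Finset.mem_filter, Finset.mem_univ, true_and]
        intro i
        rw [Function.update_of_ne (hpv i).ne, Function.update_of_ne (hqv i).ne]
        exact hz.1 i.castSucc
      have hinj2 : Set.InjOn (fun z : (Fin n → Bool) × Bool =>
          Function.update z.1 v (xor z.2 (z.1 v)))
          ((A1 ×ˢ (Finset.univ : Finset Bool) : Finset _) : Set _) := by
        rintro ⟨x, b⟩ hx ⟨x', b'⟩ hx' heq
        simp only [Finset.mem_coe, Finset.mem_product, hA1, Finset.mem_filter,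
          Finset.mem_univ, true_and, and_true] at hx hx'
        have hxw : x v = x w := by
          have := hx i₀
          rcases (hpq i₀).lt_or_gt with h | h
          · rw [hv, hw, max_eq_right h.le, min_eq_left h.le]; exact this.symm
          · rw [hv, hw, max_eq_left h.le, min_eq_right h.le]; exact this
        have hxw' : x' v = x' w := by
          have := hx' i₀
          rcases (hpq i₀).lt_or_gt with h | h
          · rw [hv, hw, max_eq_right h.le, min_eq_left h.le]; exact this.symm
          · rw [hv, hw, max_eq_left h.le, min_eq_right h.le]; exact this
        have hcoord : ∀ c : Fin n, c ≠ v → x c = x' c := by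
          intro c hc
          have := congrFun heq c
          dsimp only at this
          rwa [Function.update_of_ne hc, Function.update_of_ne hc] at this
        have hxv : x v = x' v := by
          rw [hxw, hxw', hcoord w hvw.ne]
        have hxx : x = x' := by
          funext c
          by_cases hc : c = v
          · rw [hc]; exact hxv
          · exact hcoord c hc
        have hbb : b = b' := by
          have := congrFun heq v
          dsimp only at this
          rw [Function.update_self, Function.update_self, hxx] at this
          rcases b <;> rcases b' <;> simp_all
        rw [hxx, hbb]
      have := Finset.card_le_card_of_injOn _ hinj hinj2
      rwa [Finset.card_product, Finset.card_univ, Fintype.card_bool] at this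
    have hA0le := ih (fun i => p i.castSucc) (fun i => q i.castSucc)
      (fun i j hij => hp (by simpa using hij)) (fun i j hij => hq (by simpa using hij))
      (fun i => hpq i.castSucc)
    calc A1.card * 2 ^ (L + 1) = (A1.card * 2) * 2 ^ L := by ring
      _ ≤ A0.card * 2 ^ L := Nat.mul_le_mul_right _ hkey
      _ ≤ 2 ^ n := hA0le

lemma subwordF_length {n : ℕ} (x : Fin n → Bool) (a s : ℕ) :
    (subwordF x a s).length = s := by simp [subwordF]

lemma subwordF_get {n : ℕ} (x : Fin n → Bool) (a s : ℕ) (j : Fin (subwordF x a s).length) :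
    (subwordF x a s).get j = bitAt x (a + (j : ℕ)) := by
  have hj : (j : ℕ) < s := lt_of_lt_of_eq j.2 (subwordF_length x a s)
  rw [List.get_eq_getElem]
  simp [subwordF, bitAt, List.get_eq_getElem, List.getElem_map, List.getElem_range]

lemma cover_lemma {n t a s a' s' : ℕ}
    (x : Fin n → Bool) (hx : editDist (subwordF x a s) (subwordF x a' s') < t) :
    ∃ S T : Finset ℕ, S ⊆ Finset.range s ∧ T ⊆ Finset.range s' ∧ S.card = T.card ∧
      s + s' < t + 2 * S.card ∧
      (∀ k < S.card, bitAt x (a + enumS S k) = bitAt x (a' + enumS T k)) := by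
  obtain ⟨w0, hw0, hwu, hwv⟩ : ∃ w : List Bool,
      w.length = lcsLen (subwordF x a s) (subwordF x a' s') ∧
      w.Sublist (subwordF x a s) ∧ w.Sublist (subwordF x a' s') :=
    Nat.findGreatest_spec
      (P := fun k => ∃ w : List Bool, w.length = k ∧ w.Sublist (subwordF x a s) ∧
        w.Sublist (subwordF x a' s'))
      (Nat.zero_le _) ⟨[], rfl, List.nil_sublist _, List.nil_sublist _⟩
  have hul : (subwordF x a s).length = s := subwordF_length x a s
  have hvl : (subwordF x a' s').length = s' := subwordF_length x a' s'
  have hst : s + s' < t + 2 * w0.length := by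
    rw [editDist, hul, hvl, ← hw0] at hx
    omega
  obtain ⟨f, hf⟩ := List.sublist_iff_exists_fin_orderEmbedding_get_eq.mp hwu
  obtain ⟨g, hg⟩ := List.sublist_iff_exists_fin_orderEmbedding_get_eq.mp hwv
  set F : Fin w0.length → ℕ := fun i => ((f i : Fin (subwordF x a s).length) : ℕ) with hF
  set G : Fin w0.length → ℕ := fun i => ((g i : Fin (subwordF x a' s').length) : ℕ) with hG
  have hFm : StrictMono F := fun i j hij => f.strictMono hij
  have hGm : StrictMono G := fun i j hij => g.strictMono hij
  have hcS : (Finset.image F Finset.univ).card = w0.length := by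
    rw [Finset.card_image_of_injective _ hFm.injective, Finset.card_univ, Fintype.card_fin]
  have hcT : (Finset.image G Finset.univ).card = w0.length := by
    rw [Finset.card_image_of_injective _ hGm.injective, Finset.card_univ, Fintype.card_fin]
  refine ⟨Finset.image F Finset.univ, Finset.image G Finset.univ, ?_, ?_, by rw [hcS, hcT],
    by rw [hcS]; exact hst, ?_⟩
  · intro y hy
    obtain ⟨i, _, rfl⟩ := Finset.mem_image.mp hy
    rw [Finset.mem_range]
    exact lt_of_lt_of_eq (f i).2 hul
  · intro y hy
    obtain ⟨i, _, rfl⟩ := Finset.mem_image.mp hy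
    rw [Finset.mem_range]
    exact lt_of_lt_of_eq (g i).2 hvl
  · intro k hk
    rw [hcS] at hk
    rw [enumS_image F hFm k hk, enumS_image G hGm k hk]
    have h1 := hf ⟨k, hk⟩
    have h2 := hg ⟨k, hk⟩
    rw [subwordF_get] at h1 h2
    rw [hF, hG]
    dsimp only
    rw [← h1, ← h2]
end StmtHelpers

set_option maxHeartbeats 2000000 in
/-- For intervals I = [a, a+s), I' = [a', a'+s') in [0,n) with
|I| ≥ 25t and |I △ I'| ≥ t, the probability over a uniformly random
x ∈ {0,1}^n that d_edit(x_I, x_{I'}) < t is at most 2^{-5t}. -/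
theorem stmt2 (n t a s a' s' : ℕ) (ht : 0 < t)
    (ha : a + s ≤ n) (ha' : a' + s' ≤ n)
    (hlen : 25 * t ≤ s)
    (hsd : t ≤ (symmDiff (Finset.Ico a (a + s)) (Finset.Ico a' (a' + s'))).card) :
    (Nat.card {x : Fin n → Bool // editDist (subwordF x a s) (subwordF x a' s') < t} : ℝ)
        / 2 ^ n
      ≤ (1 / 2 : ℝ) ^ (5 * t) := by
  classical
  set E : Finset (Fin n → Bool) :=
    Finset.univ.filter (fun x => editDist (subwordF x a s) (subwordF x a' s') < t) with hE
  -- the cover pieces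
  set A : Finset ℕ × Finset ℕ → Finset (Fin n → Bool) := fun ST =>
    Finset.univ.filter (fun x => ∀ k < ST.1.card,
      bitAt x (a + enumS ST.1 k) = bitAt x (a' + enumS ST.2 k)) with hA
  set Idx : Finset (Finset ℕ × Finset ℕ) :=
    ((Finset.range s).powerset ×ˢ (Finset.range s').powerset).filter
      (fun ST => ST.1.card = ST.2.card ∧ s + s' < t + 2 * ST.1.card ∧
        ∀ k < ST.1.card, a + enumS ST.1 k ≠ a' + enumS ST.2 k) with hIdx
  -- step 1 : E is covered
  have hcover : E ⊆ Idx.biUnion A := by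
    intro x hx
    rw [hE, Finset.mem_filter] at hx
    obtain ⟨S, T, hS, hT, hST, hst, hconstr⟩ := cover_lemma x hx.2
    have hLs : S.card ≤ s := by
      have := Finset.card_le_card hS; rwa [Finset.card_range] at this
    have hLs' : S.card ≤ s' := by
      have := Finset.card_le_card hT; rw [Finset.card_range] at this; omega
    have hfpf : ∀ k < S.card, a + enumS S k ≠ a' + enumS T k := by
      intro k hk heq
      have hD := fixedPoint_symmDiff_le hS hT rfl hST.symm hk heq
      omega
    rw [Finset.mem_biUnion]
    refine ⟨(S, T), ?_, ?_⟩
    · rw [hIdx, Finset.mem_filter, Finset.mem_product]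
      exact ⟨⟨Finset.mem_powerset.mpr hS, Finset.mem_powerset.mpr hT⟩, hST, hst, hfpf⟩
    · rw [hA, Finset.mem_filter]
      exact ⟨Finset.mem_univ _, hconstr⟩
  -- step 2 : each piece is small
  have hpiece : ∀ ST ∈ Idx, (A ST).card ≤ 2 ^ (n - (s + 1 - t)) := by
    rintro ⟨S, T⟩ hST
    rw [hIdx, Finset.mem_filter, Finset.mem_product] at hST
    obtain ⟨⟨hSp, hTp⟩, hcc, hstt, hfpf⟩ := hST
    dsimp only at hSp hTp hcc hstt hfpf
    rw [Finset.mem_powerset] at hSp hTp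
    have hLs : S.card ≤ s := by
      have := Finset.card_le_card hSp; rwa [Finset.card_range] at this
    have hLs' : S.card ≤ s' := by
      have := Finset.card_le_card hTp; rw [Finset.card_range] at this; omega
    set L := S.card with hL
    have hmemS : ∀ k (hk : k < L), a + enumS S k < n := by
      intro k hk
      have := hSp (enumS_mem hk)
      rw [Finset.mem_range] at this
      omega
    have hmemT : ∀ k (hk : k < L), a' + enumS T k < n := by
      intro k hk
      have : enumS T k ∈ Finset.range s' := hTp (enumS_mem (by omega))
      rw [Finset.mem_range] at this
      omega
    set p : Fin L → Fin n := fun i => ⟨a + enumS S i, hmemS i i.2⟩ with hp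
    set q : Fin L → Fin n := fun i => ⟨a' + enumS T i, hmemT i i.2⟩ with hq
    have hpm : StrictMono p := by
      intro i j hij
      have := enumS_lt (S := S) hij j.2
      simp only [hp, Fin.mk_lt_mk]
      omega
    have hqm : StrictMono q := by
      intro i j hij
      have := enumS_lt (S := T) hij (by rw [← hcc]; exact j.2)
      simp only [hq, Fin.mk_lt_mk]
      omega
    have hpq : ∀ i, p i ≠ q i := by
      intro i heq
      exact hfpf i i.2 (congrArg Fin.val heq)
    have hcount := countA n L p q hpm hqm hpq
    have hAeq : (A (S, T)).card ≤
        (Finset.univ.filter fun x : Fin n → Bool => ∀ i, x (p i) = x (q i)).card := by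
      apply Finset.card_le_card
      intro x hx
      rw [hA, Finset.mem_filter] at hx
      rw [Finset.mem_filter]
      refine ⟨Finset.mem_univ _, ?_⟩
      intro i
      have := hx.2 i i.2
      rw [bitAt, bitAt, dif_pos (hmemS i i.2), dif_pos (hmemT i i.2)] at this
      exact this
    clear_value p q
    refine le_trans hAeq ?_
    have hLn : L ≤ n := hLs.trans ((Nat.le_add_left s a).trans ha)
    have h2 : (Finset.univ.filter fun x : Fin n → Bool => ∀ i, x (p i) = x (q i)).card
        ≤ 2 ^ (n - L) := by
      have hsplit : 2 ^ (n - L) * 2 ^ L = 2 ^ n := by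
        rw [← pow_add, Nat.sub_add_cancel hLn]
      have := hcount
      rw [← hsplit] at this
      exact Nat.le_of_mul_le_mul_right this (Nat.pow_pos (by norm_num))
    refine h2.trans (Nat.pow_le_pow_right (by norm_num) ?_)
    apply Nat.sub_le_sub_left
    clear hcount hAeq h2 hpm hqm hpq hp hq p q hmemS hmemT hfpf
    omega
  -- step 3 : combine
  have hEcard : E.card ≤ Idx.card * 2 ^ (n - (s + 1 - t)) := by
    calc E.card ≤ (Idx.biUnion A).card := Finset.card_le_card hcover
      _ ≤ ∑ ST ∈ Idx, (A ST).card := Finset.card_biUnion_le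
      _ ≤ ∑ _ST ∈ Idx, 2 ^ (n - (s + 1 - t)) := Finset.sum_le_sum hpiece
      _ = Idx.card * 2 ^ (n - (s + 1 - t)) := by rw [Finset.sum_const, smul_eq_mul]
  -- step 4 : count the index set
  set Pa : Finset (Finset ℕ) := (Finset.range s).powerset.filter (fun S => s < S.card + t)
    with hPa
  set Pb : Finset (Finset ℕ) := (Finset.range s').powerset.filter (fun T => s' < T.card + t)
    with hPb
  have hIdxsub : Idx ⊆ Pa ×ˢ Pb := by
    rintro ⟨S, T⟩ hST
    rw [hIdx, Finset.mem_filter, Finset.mem_product] at hST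
    obtain ⟨⟨hSp, hTp⟩, hcc, hstt, -⟩ := hST
    dsimp only at hSp hTp hcc hstt
    have hLs : S.card ≤ s := by
      have := Finset.card_le_card (Finset.mem_powerset.mp hSp)
      rwa [Finset.card_range] at this
    have hLs' : T.card ≤ s' := by
      have := Finset.card_le_card (Finset.mem_powerset.mp hTp)
      rwa [Finset.card_range] at this
    rw [Finset.mem_product, hPa, hPb, Finset.mem_filter, Finset.mem_filter]
    dsimp only
    exact ⟨⟨hSp, by omega⟩, hTp, by omega⟩
  have hIdxcard : Idx.card ≤ Pa.card * Pb.card := by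
    have := Finset.card_le_card hIdxsub
    rwa [Finset.card_product] at this
  -- step 5 : binomial bounds
  have hbin : ∀ (m c : ℕ), ((Finset.range m).powerset.filter
      (fun S : Finset ℕ => m < S.card + c)).card * 64 ^ (m + 1 - c) ≤ (64 + 2) ^ m := by
    intro m c
    have hsub2 : (Finset.range m).powerset.filter (fun S : Finset ℕ => m < S.card + c) ⊆
        (Finset.Icc (m + 1 - c) m).biUnion
          (fun L => Finset.powersetCard L (Finset.range m)) := by
      intro S hS
      rw [Finset.mem_filter, Finset.mem_powerset] at hS
      have hcard : S.card ≤ m := by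
        have := Finset.card_le_card hS.1; rwa [Finset.card_range] at this
      rw [Finset.mem_biUnion]
      exact ⟨S.card, by rw [Finset.mem_Icc]; omega,
        Finset.mem_powersetCard.mpr ⟨hS.1, rfl⟩⟩
    have h1 : ((Finset.range m).powerset.filter
        (fun S : Finset ℕ => m < S.card + c)).card ≤
        ∑ L ∈ Finset.Icc (m + 1 - c) m, Nat.choose m L := by
      calc _ ≤ ((Finset.Icc (m + 1 - c) m).biUnion
            (fun L => Finset.powersetCard L (Finset.range m))).card :=
            Finset.card_le_card hsub2
        _ ≤ ∑ L ∈ Finset.Icc (m + 1 - c) m, (Finset.powersetCard L (Finset.range m)).card :=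
            Finset.card_biUnion_le
        _ = ∑ L ∈ Finset.Icc (m + 1 - c) m, Nat.choose m L := by
            apply Finset.sum_congr rfl
            intro L _
            rw [Finset.card_powersetCard, Finset.card_range]
    calc ((Finset.range m).powerset.filter (fun S : Finset ℕ => m < S.card + c)).card
          * 64 ^ (m + 1 - c)
        ≤ (∑ L ∈ Finset.Icc (m + 1 - c) m, Nat.choose m L) * 64 ^ (m + 1 - c) :=
          Nat.mul_le_mul_right _ h1
      _ = ∑ L ∈ Finset.Icc (m + 1 - c) m, Nat.choose m L * 64 ^ (m + 1 - c) := by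
          rw [Finset.sum_mul]
      _ ≤ ∑ L ∈ Finset.Icc (m + 1 - c) m, 64 ^ L * 2 ^ (m - L) * Nat.choose m L := by
          apply Finset.sum_le_sum
          intro L hL
          rw [Finset.mem_Icc] at hL
          have h64 : 64 ^ (m + 1 - c) ≤ 64 ^ L := Nat.pow_le_pow_right (by norm_num) hL.1
          calc Nat.choose m L * 64 ^ (m + 1 - c) ≤ Nat.choose m L * 64 ^ L :=
               Nat.mul_le_mul_left _ h64
            _ ≤ Nat.choose m L * (64 ^ L * 2 ^ (m - L)) := by
               apply Nat.mul_le_mul_left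
               exact Nat.le_mul_of_pos_right _ (Nat.pow_pos (by norm_num))
            _ = 64 ^ L * 2 ^ (m - L) * Nat.choose m L := by ring
      _ ≤ ∑ L ∈ Finset.range (m + 1), 64 ^ L * 2 ^ (m - L) * Nat.choose m L := by
          apply Finset.sum_le_sum_of_subset
          intro L hL
          rw [Finset.mem_Icc] at hL
          rw [Finset.mem_range]
          omega
      _ = (64 + 2) ^ m := (add_pow 64 2 m).symm
  have hPaC : Pa.card * 64 ^ (s + 1 - t) ≤ 66 ^ s := by
    have := hbin s t
    norm_num at this ⊢
    exact this
  have hPbC : Pb.card * 64 ^ (s' + 1 - t) ≤ 66 ^ s' := by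
    have := hbin s' t
    norm_num at this ⊢
    exact this
  -- step 6 : numeric endgame
  have hKfinal : E.card ≤ 2 ^ (n - 5 * t) := by
    rcases Nat.eq_zero_or_pos Idx.card with h0 | hposI
    · rw [h0, Nat.zero_mul] at hEcard
      calc E.card ≤ 0 := hEcard
        _ ≤ 2 ^ (n - 5 * t) := Nat.zero_le _
    · -- extract a witness to know s' is comparable to s
      obtain ⟨⟨S, T⟩, hST⟩ := Finset.card_pos.mp hposI
      rw [hIdx, Finset.mem_filter, Finset.mem_product] at hST
      obtain ⟨⟨hSp, hTp⟩, hcc, hstt, -⟩ := hST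
      dsimp only at hSp hTp hcc hstt
      have hLs : S.card ≤ s := by
        have := Finset.card_le_card (Finset.mem_powerset.mp hSp)
        rwa [Finset.card_range] at this
      have hLs' : S.card ≤ s' := by
        have := Finset.card_le_card (Finset.mem_powerset.mp hTp)
        rw [Finset.card_range] at this; omega
      have hs'ub : s' ≤ s + t - 1 := by omega
      have hs'lb : s + 1 ≤ s' + t := by omega
      -- the big multiplication
      have hKK : Idx.card * (64 ^ ((s + 1 - t) + (s' + 1 - t))) ≤ 66 ^ s * 66 ^ s' := by
        calc Idx.card * (64 ^ ((s + 1 - t) + (s' + 1 - t)))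
            ≤ (Pa.card * Pb.card) * (64 ^ ((s + 1 - t) + (s' + 1 - t))) :=
              Nat.mul_le_mul_right _ hIdxcard
          _ = (Pa.card * 64 ^ (s + 1 - t)) * (Pb.card * 64 ^ (s' + 1 - t)) := by
              rw [pow_add]; ring
          _ ≤ 66 ^ s * 66 ^ s' := Nat.mul_le_mul hPaC hPbC
      have h66 : (66 : ℕ) ^ 16 ≤ 2 ^ 97 := by norm_num
      set c : ℕ := (s + 1 - t) + (s' + 1 - t) with hc
      have hK16 : Idx.card ^ 16 * 2 ^ (96 * c) ≤ 2 ^ (97 * (s + s')) := by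
        calc Idx.card ^ 16 * 2 ^ (96 * c) = (Idx.card * 64 ^ c) ^ 16 := by
              rw [mul_pow, ← pow_mul]
              congr 1
              rw [show (64 : ℕ) = 2 ^ 6 by norm_num, ← pow_mul]
              congr 1
              ring
          _ ≤ (66 ^ s * 66 ^ s') ^ 16 := Nat.pow_le_pow_left hKK 16
          _ = (66 ^ (s + s')) ^ 16 := by rw [← pow_add]
          _ = (66 ^ 16) ^ (s + s') := by rw [← pow_mul, ← pow_mul, Nat.mul_comm]
          _ ≤ (2 ^ 97) ^ (s + s') := Nat.pow_le_pow_left h66 _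
          _ = 2 ^ (97 * (s + s')) := by rw [← pow_mul]
      have hcle : 96 * c ≤ 97 * (s + s') := by omega
      have hK16b : Idx.card ^ 16 ≤ 2 ^ (97 * (s + s') - 96 * c) := by
        have hsplit : 2 ^ (97 * (s + s') - 96 * c) * 2 ^ (96 * c) = 2 ^ (97 * (s + s')) := by
          rw [← pow_add]; congr 1; omega
        rw [← hsplit] at hK16
        exact Nat.le_of_mul_le_mul_right hK16 (Nat.pow_pos (by norm_num))
      have hKb : Idx.card ≤ 2 ^ (s - 6 * t + 1) := by
        rw [← Nat.pow_le_pow_iff_left (n := 16) (by norm_num)]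
        refine hK16b.trans ?_
        rw [← pow_mul]
        apply Nat.pow_le_pow_right (by norm_num)
        omega
      calc E.card ≤ Idx.card * 2 ^ (n - (s + 1 - t)) := hEcard
        _ ≤ 2 ^ (s - 6 * t + 1) * 2 ^ (n - (s + 1 - t)) := Nat.mul_le_mul_right _ hKb
        _ = 2 ^ (n - 5 * t) := by rw [← pow_add]; congr 1; omega
  -- step 7 : back to the reals
  have hNatCard : (Nat.card {x : Fin n → Bool //
      editDist (subwordF x a s) (subwordF x a' s') < t}) = E.card := by
    rw [Nat.card_eq_fintype_card, hE]
    convert Fintype.card_subtype _ using 2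
  rw [hNatCard]
  rw [div_le_iff₀ (by positivity)]
  have hfinal : ((E.card : ℝ)) ≤ 2 ^ (n - 5 * t) := by
    exact_mod_cast hKfinal
  refine hfinal.trans ?_
  have h5t : 5 * t ≤ n := by omega
  have hpow : ((2 : ℝ) ^ (n - 5 * t)) * 2 ^ (5 * t) = 2 ^ n := by
    rw [← pow_add]; congr 1; omega
  rw [one_div, inv_pow, inv_mul_eq_div, le_div_iff₀ (by positivity)]
  exact le_of_eq hpow
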